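/- Let r ≥ 3 and n ≥ 2r + 1. Then every proper coloring of the complement of the Kneser graph K(n,r) is distinguishing: for any proper coloring, the only automorphism of the graph that maps every color class to itself is the identity. Consequently, the distinguishing chromatic number of the complement of K(n,r) equals its chromatic number. -/

import Mathlib

def IsGraphAutomorphism {V : Type*} (G : SimpleGraph V) (σ : Equiv.Perm V) : Prop :=
  ∀ u v : V, G.Adj (σ u) (σ v) ↔ G.Adj u v

def IsDistinguishing {V : Type*} (G : SimpleGraph V) {α : Type*} (C : G.Coloring α) : Prop :=
  ∀ σ : Equiv.Perm V, IsGraphAutomorphism G σ → (∀ v, C (σ v) = C v) → σ = 1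

noncomputable def distChromNum {V : Type*} (G : SimpleGraph V) : ℕ :=
  sInf {n : ℕ | ∃ C : G.Coloring (Fin n), IsDistinguishing G C}

noncomputable def chromNum {V : Type*} (G : SimpleGraph V) : ℕ :=
  sInf {n : ℕ | G.Colorable n}

def KneserCompl (n r : ℕ) : SimpleGraph {s : Finset (Fin n) // s.card = r} where
  Adj a b := a ≠ b ∧ (a.1 ∩ b.1).Nonempty
  symm := by
    constructor
    rintro a b ⟨h1, h2⟩
    refine ⟨h1.symm, ?_⟩
    rwa [Finset.inter_comm]
  loopless := by
    constructor
    rintro a ⟨h1, _⟩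
    exact h1 rfl

namespace KCaux

open Finset

variable {n r : ℕ}

abbrev V (n r : ℕ) := {s : Finset (Fin n) // s.card = r}

/-- the set of vertices disjoint from both X and Y -/
noncomputable def DS (X Y : V n r) : Finset (V n r) :=
  Finset.univ.filter (fun Z => Z.1 ∩ X.1 = ∅ ∧ Z.1 ∩ Y.1 = ∅)

lemma mem_DS {X Y Z : V n r} :
    Z ∈ DS X Y ↔ (Z.1 ∩ X.1 = ∅ ∧ Z.1 ∩ Y.1 = ∅) := by
  simp [DS]

/-- number of r-subsets disjoint from X ∪ Y -/
lemma card_DS (X Y : V n r) :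
    (DS X Y).card = (n - (X.1 ∪ Y.1).card).choose r := by
  classical
  have h : (DS X Y).card = ((X.1 ∪ Y.1)ᶜ.powersetCard r).card := by
    apply Finset.card_bij (fun Z _ => Z.1)
    · intro Z hZ
      rw [mem_DS] at hZ
      rw [Finset.mem_powersetCard]
      refine ⟨?_, Z.2⟩
      intro a ha
      simp only [Finset.mem_compl, Finset.mem_union]
      rintro (h1 | h2)
      · exact absurd (Finset.mem_inter.2 ⟨ha, h1⟩) (by rw [hZ.1]; simp)
      · exact absurd (Finset.mem_inter.2 ⟨ha, h2⟩) (by rw [hZ.2]; simp)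
    · intro Z₁ h₁ Z₂ h₂ h
      exact Subtype.ext h
    · intro s hs
      rw [Finset.mem_powersetCard] at hs
      refine ⟨⟨s, hs.2⟩, ?_, rfl⟩
      rw [mem_DS]
      constructor
      · ext a; simp only [Finset.mem_inter, Finset.notMem_empty, iff_false, not_and]
        intro ha
        have := hs.1 ha; simp only [Finset.mem_compl, Finset.mem_union] at this
        exact fun h' => this (Or.inl h')
      · ext a; simp only [Finset.mem_inter, Finset.notMem_empty, iff_false, not_and]
        intro ha
        have := hs.1 ha; simp only [Finset.mem_compl, Finset.mem_union] at this
        exact fun h' => this (Or.inr h')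
  rw [h, Finset.card_powersetCard, Finset.card_compl]
  simp

section Auto

variable (σ : Equiv.Perm (V n r)) (hauto : IsGraphAutomorphism (KneserCompl n r) σ)
  (hr : 3 ≤ r) (hn : 2 * r + 1 ≤ n)

include hauto hr in
/-- disjointness is preserved -/
lemma disj_pres : ∀ X Y : V n r, (σ X).1 ∩ (σ Y).1 = ∅ ↔ X.1 ∩ Y.1 = ∅ := by
  intro X Y
  by_cases hXY : X = Y
  · subst hXY
    have h1 : X.1 ∩ X.1 ≠ ∅ := by
      rw [Finset.inter_self]
      intro h
      have := X.2; rw [h] at this; simp at this; omega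
    have h2 : (σ X).1 ∩ (σ X).1 ≠ ∅ := by
      rw [Finset.inter_self]
      intro h
      have := (σ X).2; rw [h] at this; simp at this; omega
    tauto
  · have hσXY : σ X ≠ σ Y := fun h => hXY (σ.injective h)
    have := hauto X Y
    simp only [KneserCompl] at this
    rw [not_iff_not.symm]
    push_neg
    constructor
    · intro h
      have : (σ X).1 ∩ (σ Y).1 ≠ ∅ := Finset.nonempty_iff_ne_empty.1 h
      have hne : ((σ X).1 ∩ (σ Y).1).Nonempty := Finset.nonempty_iff_ne_empty.2 this
      have hadj : (KneserCompl n r).Adj (σ X) (σ Y) := ⟨hσXY, hne⟩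
      have := (hauto X Y).1 hadj
      exact this.2
    · intro h
      have hne : (X.1 ∩ Y.1).Nonempty := h
      have hadj : (KneserCompl n r).Adj X Y := ⟨hXY, hne⟩
      have := (hauto X Y).2 hadj
      exact this.2

include hauto hr in
lemma DS_pres (X Y : V n r) : (DS (σ X) (σ Y)).card = (DS X Y).card := by
  classical
  apply Finset.card_bij (fun Z _ => σ.symm Z)
  · intro Z hZ
    rw [mem_DS] at hZ ⊢
    have h1 : (σ (σ.symm Z)).1 ∩ (σ X).1 = ∅ := by
      rw [Equiv.apply_symm_apply]; exact hZ.1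
    have h2 : (σ (σ.symm Z)).1 ∩ (σ Y).1 = ∅ := by
      rw [Equiv.apply_symm_apply]; exact hZ.2
    exact ⟨(disj_pres σ hauto hr (σ.symm Z) X).1 h1,
      (disj_pres σ hauto hr (σ.symm Z) Y).1 h2⟩
  · intro Z₁ _ Z₂ _ h
    exact σ.symm.injective h
  · intro Z hZ
    rw [mem_DS] at hZ
    refine ⟨σ Z, ?_, by simp⟩
    rw [mem_DS]
    exact ⟨(disj_pres σ hauto hr Z X).2 hZ.1, (disj_pres σ hauto hr Z Y).2 hZ.2⟩

include hauto hr hn in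
/-- |X ∩ Y| = r-1 is preserved -/
lemma inter_r1_pres (X Y : V n r) (h : (X.1 ∩ Y.1).card = r - 1) :
    ((σ X).1 ∩ (σ Y).1).card = r - 1 := by
  classical
  have hXY : X ≠ Y := by
    intro hEq; subst hEq
    rw [Finset.inter_self, X.2] at h; omega
  have hU : (X.1 ∪ Y.1).card = r + 1 := by
    have := Finset.card_union_add_card_inter X.1 Y.1
    rw [X.2, Y.2, h] at this; omega
  have hσXY : σ X ≠ σ Y := fun hEq => hXY (σ.injective hEq)
  -- card of union of images
  have hUb : r + 1 ≤ ((σ X).1 ∪ (σ Y).1).card := by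
    by_contra hcon
    push_neg at hcon
    have hsub : (σ X).1 ⊆ (σ X).1 ∪ (σ Y).1 := Finset.subset_union_left
    have hsub' : (σ Y).1 ⊆ (σ X).1 ∪ (σ Y).1 := Finset.subset_union_right
    have hc1 : (σ X).1 = (σ X).1 ∪ (σ Y).1 := by
      apply Finset.eq_of_subset_of_card_le hsub
      rw [(σ X).2]; omega
    have hc2 : (σ Y).1 = (σ X).1 ∪ (σ Y).1 := by
      apply Finset.eq_of_subset_of_card_le hsub'
      rw [(σ Y).2]; omega
    exact hσXY (Subtype.ext (hc1.trans hc2.symm))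
  have hUb2 : ((σ X).1 ∪ (σ Y).1).card ≤ 2 * r := by
    calc ((σ X).1 ∪ (σ Y).1).card ≤ (σ X).1.card + (σ Y).1.card := Finset.card_union_le _ _
      _ = 2 * r := by rw [(σ X).2, (σ Y).2]; ring
  -- counting equation
  have hcount : (n - ((σ X).1 ∪ (σ Y).1).card).choose r = (n - (r+1)).choose r := by
    have e1 := card_DS (σ X) (σ Y)
    have e2 := card_DS X Y
    have e3 := DS_pres σ hauto hr X Y
    rw [hU] at e2
    rw [← e1, e3, e2]
  -- strict monotonicity forces the union card
  have hEqU : ((σ X).1 ∪ (σ Y).1).card = r + 1 := by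
    by_contra hne
    have hgt : r + 1 < ((σ X).1 ∪ (σ Y).1).card := lt_of_le_of_ne hUb (Ne.symm hne)
    -- then n - |∪| ≤ n - r - 2 < n - r - 1
    have h1 : (n - ((σ X).1 ∪ (σ Y).1).card).choose r ≤ (n - (r+2)).choose r := by
      apply Nat.choose_mono
      omega
    have h2 : (n - (r+2)).choose r < (n - (r+1)).choose r := by
      have hstep : n - (r+1) = (n - (r+2)) + 1 := by omega
      have hps : r - 1 + 1 = r := by omega
      have key : ((n-(r+2))+1).choose ((r-1)+1)
          = (n-(r+2)).choose (r-1) + (n-(r+2)).choose ((r-1)+1) :=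
        Nat.choose_succ_succ _ _
      rw [hps] at key
      have hpos : 0 < (n - (r+2)).choose (r-1) := Nat.choose_pos (by omega)
      rw [hstep]
      omega
    omega
  have := Finset.card_union_add_card_inter (σ X).1 (σ Y).1
  rw [(σ X).2, (σ Y).2, hEqU] at this
  omega

end Auto

end KCaux

namespace KCaux

open Finset

variable {n r : ℕ}

theorem key (hr : 3 ≤ r) (hn : 2 * r + 1 ≤ n) (σ : Equiv.Perm (V n r))
    (hauto : IsGraphAutomorphism (KneserCompl n r) σ)
    (hfd : ∀ v : V n r, σ v = v ∨ (σ v).1 ∩ v.1 = ∅) : σ = 1 := by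
  classical
  by_contra hσne
  have : ∃ A : V n r, σ A ≠ A := by
    by_contra h
    push_neg at h
    exact hσne (Equiv.ext h)
  obtain ⟨A, hA⟩ := this
  have hAdisj : (σ A).1 ∩ A.1 = ∅ := (hfd A).resolve_left hA
  -- choose D ⊆ A with |D| = r - 1
  obtain ⟨D, hDsub, hDcard⟩ :=
    Finset.exists_subset_card_eq (show r - 1 ≤ A.1.card by rw [A.2]; omega)
  -- the element u₀ of A \ D
  have hAD : (A.1 \ D).card = 1 := by
    rw [Finset.card_sdiff_of_subset hDsub, A.2, hDcard]; omega
  obtain ⟨u₀, hu₀⟩ := Finset.card_eq_one.1 hAD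
  have hu₀A : u₀ ∈ A.1 := by
    have : u₀ ∈ A.1 \ D := by rw [hu₀]; exact Finset.mem_singleton_self _
    exact (Finset.mem_sdiff.1 this).1
  have hu₀D : u₀ ∉ D := by
    have : u₀ ∈ A.1 \ D := by rw [hu₀]; exact Finset.mem_singleton_self _
    exact (Finset.mem_sdiff.1 this).2
  -- vertices S x = insert x D for x ∉ D
  have hScard : ∀ x : Fin n, x ∉ D → (insert x D).card = r := by
    intro x hx
    rw [Finset.card_insert_of_notMem hx, hDcard]; omega
  set S : Fin n → V n r := fun x =>
    if hx : x ∉ D then ⟨insert x D, hScard x hx⟩ else A with hS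
  have hSval : ∀ x (hx : x ∉ D), (S x).1 = insert x D := by
    intro x hx; simp [hS, hx]
  have hSA : S u₀ = A := by
    apply Subtype.ext
    rw [hSval u₀ hu₀D]
    apply Finset.eq_of_subset_of_card_le
    · intro e he
      rcases Finset.mem_insert.1 he with h | h
      · subst h; exact hu₀A
      · exact hDsub h
    · rw [A.2, hScard u₀ hu₀D]
  set T : Fin n → Finset (Fin n) := fun x => (σ (S x)).1 with hT
  have hTcard : ∀ x, (T x).card = r := fun x => (σ (S x)).2
  have hSinj : ∀ x y, x ∉ D → y ∉ D → x ≠ y → S x ≠ S y := by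
    intro x y hx hy hxy h
    have := congrArg Subtype.val h
    rw [hSval x hx, hSval y hy] at this
    have : x ∈ insert y D := this ▸ Finset.mem_insert_self x D
    rcases Finset.mem_insert.1 this with h' | h'
    · exact hxy h'
    · exact hx h'
  have hTinj : ∀ x y, x ∉ D → y ∉ D → x ≠ y → T x ≠ T y := by
    intro x y hx hy hxy h
    exact hSinj x y hx hy hxy (σ.injective (Subtype.ext h))
  have hTpair : ∀ x y, x ∉ D → y ∉ D → x ≠ y → (T x ∩ T y).card = r - 1 := by
    intro x y hx hy hxy
    apply inter_r1_pres σ hauto hr hn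
    have hint : (S x).1 ∩ (S y).1 = D := by
      rw [hSval x hx, hSval y hy]
      ext e
      simp only [Finset.mem_inter, Finset.mem_insert]
      constructor
      · rintro ⟨h1 | h1, h2 | h2⟩
        · exact absurd (h1.symm.trans h2) hxy
        · exact h2
        · exact h1
        · exact h1
      · intro h; exact ⟨Or.inr h, Or.inr h⟩
    rw [hint, hDcard]
  -- pick x₁ ∉ D, x₁ ≠ u₀
  have hcompl : 0 < ((insert u₀ D)ᶜ : Finset (Fin n)).card := by
    rw [Finset.card_compl, hScard u₀ hu₀D]
    simp only [Fintype.card_fin]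
    omega
  obtain ⟨x₁, hx₁⟩ := Finset.card_pos.1 hcompl
  rw [Finset.mem_compl, Finset.mem_insert] at hx₁
  push_neg at hx₁
  obtain ⟨hx₁u₀, hx₁D⟩ := hx₁
  -- the common core candidate
  set Dstar : Finset (Fin n) := T u₀ ∩ T x₁ with hDstar
  have hDstarcard : Dstar.card = r - 1 := hTpair u₀ x₁ hu₀D hx₁D (Ne.symm hx₁u₀)
  have hDstar0 : Dstar ⊆ T u₀ := Finset.inter_subset_left
  have hDstar1 : Dstar ⊆ T x₁ := Finset.inter_subset_right
  -- p₀ and p₁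
  have hp₀' : (T u₀ \ Dstar).card = 1 := by
    rw [Finset.card_sdiff_of_subset hDstar0, hTcard, hDstarcard]; omega
  obtain ⟨p₀, hp₀⟩ := Finset.card_eq_one.1 hp₀'
  have hp₁' : (T x₁ \ Dstar).card = 1 := by
    rw [Finset.card_sdiff_of_subset hDstar1, hTcard, hDstarcard]; omega
  obtain ⟨p₁, hp₁⟩ := Finset.card_eq_one.1 hp₁'
  have hTu₀eq : T u₀ = Dstar ∪ {p₀} := by
    rw [← hp₀, Finset.union_sdiff_of_subset hDstar0]
  have hTx₁eq : T x₁ = Dstar ∪ {p₁} := by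
    rw [← hp₁, Finset.union_sdiff_of_subset hDstar1]
  have hp₀mem : p₀ ∈ T u₀ ∧ p₀ ∉ Dstar := by
    have : p₀ ∈ T u₀ \ Dstar := by rw [hp₀]; exact Finset.mem_singleton_self _
    exact ⟨(Finset.mem_sdiff.1 this).1, (Finset.mem_sdiff.1 this).2⟩
  have hp₁mem : p₁ ∈ T x₁ ∧ p₁ ∉ Dstar := by
    have : p₁ ∈ T x₁ \ Dstar := by rw [hp₁]; exact Finset.mem_singleton_self _
    exact ⟨(Finset.mem_sdiff.1 this).1, (Finset.mem_sdiff.1 this).2⟩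
  have hp₀₁ : p₀ ≠ p₁ := by
    intro h
    apply hTinj u₀ x₁ hu₀D hx₁D (Ne.symm hx₁u₀)
    rw [hTu₀eq, hTx₁eq, h]
  -- shape lemma
  have hshape : ∀ w, w ∉ D → ¬ Dstar ⊆ T w →
      ∃ d ∈ Dstar, T w = (Dstar.erase d) ∪ {p₀, p₁} := by
    intro w hwD hnsub
    have hwu₀ : w ≠ u₀ := by rintro rfl; exact hnsub hDstar0
    have hwx₁ : w ≠ x₁ := by rintro rfl; exact hnsub hDstar1
    have hw0 : (T w ∩ T u₀).card = r - 1 := hTpair w u₀ hwD hu₀D hwu₀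
    have hw1 : (T w ∩ T x₁).card = r - 1 := hTpair w x₁ hwD hx₁D hwx₁
    -- card of T w ∩ Dstar is at most r - 2
    have hcle : (T w ∩ Dstar).card ≤ r - 2 := by
      have hss : T w ∩ Dstar ⊂ Dstar := by
        constructor
        · exact Finset.inter_subset_right
        · intro hsup
          exact hnsub (fun e he => (Finset.mem_inter.1 (hsup he)).1)
      have := Finset.card_lt_card hss
      omega
    have hp₀w : p₀ ∈ T w := by
      by_contra hp
      have hsub : T w ∩ T u₀ ⊆ T w ∩ Dstar := by
        intro e he
        have he' := Finset.mem_inter.1 he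
        rw [hTu₀eq] at he'
        rcases Finset.mem_union.1 he'.2 with h | h
        · exact Finset.mem_inter.2 ⟨he'.1, h⟩
        · rw [Finset.mem_singleton] at h
          exact absurd (h ▸ he'.1) hp
      have := Finset.card_le_card hsub
      omega
    have hp₁w : p₁ ∈ T w := by
      by_contra hp
      have hsub : T w ∩ T x₁ ⊆ T w ∩ Dstar := by
        intro e he
        have he' := Finset.mem_inter.1 he
        rw [hTx₁eq] at he'
        rcases Finset.mem_union.1 he'.2 with h | h
        · exact Finset.mem_inter.2 ⟨he'.1, h⟩
        · rw [Finset.mem_singleton] at h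
          exact absurd (h ▸ he'.1) hp
      have := Finset.card_le_card hsub
      omega
    have hcge : r - 2 ≤ (T w ∩ Dstar).card := by
      have hsub : T w ∩ T u₀ ⊆ (T w ∩ Dstar) ∪ {p₀} := by
        intro e he
        have he' := Finset.mem_inter.1 he
        rw [hTu₀eq] at he'
        rcases Finset.mem_union.1 he'.2 with h | h
        · exact Finset.mem_union_left _ (Finset.mem_inter.2 ⟨he'.1, h⟩)
        · exact Finset.mem_union_right _ h
      have h1 := Finset.card_le_card hsub
      have h2 : ((T w ∩ Dstar) ∪ {p₀}).card ≤ (T w ∩ Dstar).card + 1 := by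
        have := Finset.card_union_le (T w ∩ Dstar) ({p₀} : Finset (Fin n))
        simpa using this
      omega
    have hceq : (T w ∩ Dstar).card = r - 2 := le_antisymm hcle hcge
    -- missing element d
    have hd' : (Dstar \ T w).card = 1 := by
      have := Finset.card_inter_add_card_sdiff Dstar (T w)
      rw [Finset.inter_comm] at this
      rw [hceq] at this
      omega
    obtain ⟨d, hd⟩ := Finset.card_eq_one.1 hd'
    have hdmem : d ∈ Dstar ∧ d ∉ T w := by
      have : d ∈ Dstar \ T w := by rw [hd]; exact Finset.mem_singleton_self _
      exact ⟨(Finset.mem_sdiff.1 this).1, (Finset.mem_sdiff.1 this).2⟩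
    refine ⟨d, hdmem.1, ?_⟩
    have hsub : (Dstar.erase d) ∪ {p₀, p₁} ⊆ T w := by
      intro e he
      rcases Finset.mem_union.1 he with h | h
      · have h1 := Finset.mem_of_mem_erase h
        have h2 := Finset.ne_of_mem_erase h
        by_contra hc
        have : e ∈ Dstar \ T w := Finset.mem_sdiff.2 ⟨h1, hc⟩
        rw [hd, Finset.mem_singleton] at this
        exact h2 this
      · rcases Finset.mem_insert.1 h with h' | h'
        · exact h' ▸ hp₀w
        · rw [Finset.mem_singleton] at h'
          exact h' ▸ hp₁w
    have hcard2 : ((Dstar.erase d) ∪ {p₀, p₁}).card = r := by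
      rw [Finset.card_union_of_disjoint]
      · rw [Finset.card_erase_of_mem hdmem.1, hDstarcard]
        rw [Finset.card_insert_of_notMem (by simp [hp₀₁]), Finset.card_singleton]
        omega
      · rw [Finset.disjoint_right]
        intro e he
        rcases Finset.mem_insert.1 he with h' | h'
        · subst h'; exact fun hc => hp₀mem.2 (Finset.mem_of_mem_erase hc)
        · rw [Finset.mem_singleton] at h'
          subst h'; exact fun hc => hp₁mem.2 (Finset.mem_of_mem_erase hc)
    exact (Finset.eq_of_subset_of_card_le hsub (by rw [hTcard, hcard2])).symm
  -- the common core property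
  have hcore : ∀ x, x ∉ D → Dstar ⊆ T x := by
    by_contra hcon
    push_neg at hcon
    obtain ⟨z, hzD, hnsub⟩ := hcon
    obtain ⟨dz, hdzmem, hTz⟩ := hshape z hzD hnsub
    -- every T w is in a small set 𝒯
    set 𝒯 : Finset (Finset (Fin n)) :=
      insert (T u₀) (insert (T x₁) (Dstar.image (fun d => (Dstar.erase d) ∪ {p₀, p₁})))
      with h𝒯
    have hclaim : ∀ w, w ∉ D → T w ∈ 𝒯 := by
      intro w hwD
      by_cases hsub : Dstar ⊆ T w
      · -- T w = Dstar ∪ {q}, and q ∈ {p₀, p₁}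
        have hq' : (T w \ Dstar).card = 1 := by
          rw [Finset.card_sdiff_of_subset hsub, hTcard, hDstarcard]; omega
        obtain ⟨q, hq⟩ := Finset.card_eq_one.1 hq'
        have hTweq : T w = Dstar ∪ {q} := by
          rw [← hq, Finset.union_sdiff_of_subset hsub]
        have hqmem : q ∈ T w ∧ q ∉ Dstar := by
          have : q ∈ T w \ Dstar := by rw [hq]; exact Finset.mem_singleton_self _
          exact ⟨(Finset.mem_sdiff.1 this).1, (Finset.mem_sdiff.1 this).2⟩
        have hwz : w ≠ z := by rintro rfl; exact hnsub hsub
        have hwzcard : (T w ∩ T z).card = r - 1 := hTpair w z hwD hzD hwz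
        have hdzTz : dz ∉ T z := by
          rw [hTz]
          intro hc
          rcases Finset.mem_union.1 hc with h | h
          · exact (Finset.notMem_erase dz Dstar) h
          · rcases Finset.mem_insert.1 h with h' | h'
            · exact hp₀mem.2 (h' ▸ hdzmem)
            · rw [Finset.mem_singleton] at h'
              exact hp₁mem.2 (h' ▸ hdzmem)
        have hqTz : q ∈ T z := by
          by_contra hqz
          have hsub2 : T w ∩ T z ⊆ Dstar.erase dz := by
            intro e he
            have he' := Finset.mem_inter.1 he
            have heTw := he'.1
            rw [hTweq] at heTw
            rcases Finset.mem_union.1 heTw with h | h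
            · apply Finset.mem_erase.2
              refine ⟨?_, h⟩
              rintro rfl
              exact hdzTz he'.2
            · rw [Finset.mem_singleton] at h
              exact absurd (h ▸ he'.2) hqz
          have := Finset.card_le_card hsub2
          rw [hwzcard, Finset.card_erase_of_mem hdzmem, hDstarcard] at this
          omega
        have hqp : q = p₀ ∨ q = p₁ := by
          rw [hTz] at hqTz
          rcases Finset.mem_union.1 hqTz with h | h
          · exact absurd (Finset.mem_of_mem_erase h) hqmem.2
          · rcases Finset.mem_insert.1 h with h' | h'
            · exact Or.inl h'
            · exact Or.inr (Finset.mem_singleton.1 h')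
        rcases hqp with h | h
        · subst h
          have : T w = T u₀ := by rw [hTweq, hTu₀eq]
          rw [h𝒯]; rw [this]; exact Finset.mem_insert_self _ _
        · subst h
          have : T w = T x₁ := by rw [hTweq, hTx₁eq]
          rw [h𝒯, this]
          exact Finset.mem_insert_of_mem (Finset.mem_insert_self _ _)
      · obtain ⟨d, hdm, hTweq⟩ := hshape w hwD hsub
        rw [h𝒯]
        apply Finset.mem_insert_of_mem
        apply Finset.mem_insert_of_mem
        rw [Finset.mem_image]
        exact ⟨d, hdm, hTweq.symm⟩
    -- cardinality contradiction
    have hinj : Set.InjOn T ((Dᶜ : Finset (Fin n)) : Set (Fin n)) := by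
      intro x hx y hy hxy
      rw [Finset.coe_compl, Set.mem_compl_iff, Finset.mem_coe] at hx hy
      by_contra hne
      exact hTinj x y hx hy hne hxy
    have hmaps : ∀ w ∈ (Dᶜ : Finset (Fin n)), T w ∈ 𝒯 := by
      intro w hw
      exact hclaim w (Finset.mem_compl.1 hw)
    have hcard1 := Finset.card_le_card_of_injOn T hmaps hinj
    have hcompl2 : (Dᶜ : Finset (Fin n)).card = n - (r - 1) := by
      rw [Finset.card_compl, hDcard]; simp
    have hcard𝒯 : 𝒯.card ≤ r + 1 := by
      calc 𝒯.card ≤ (insert (T x₁) (Dstar.image fun d => (Dstar.erase d) ∪ {p₀, p₁})).card + 1 :=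
          Finset.card_insert_le _ _
        _ ≤ ((Dstar.image fun d => (Dstar.erase d) ∪ {p₀, p₁}).card + 1) + 1 := by
            have := Finset.card_insert_le (T x₁)
              (Dstar.image fun d => (Dstar.erase d) ∪ {p₀, p₁})
            omega
        _ ≤ ((r - 1) + 1) + 1 := by
            have := Finset.card_image_le (s := Dstar)
              (f := fun d => (Dstar.erase d) ∪ {p₀, p₁})
            rw [hDstarcard] at this
            omega
        _ ≤ r + 1 := by omega
    rw [hcompl2] at hcard1
    omega
  -- finale
  have hTu₀A : T u₀ = (σ A).1 := by
    have h0 : T u₀ = (σ (S u₀)).1 := rfl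
    rw [h0, hSA]
  have hDstarA : ∀ e ∈ Dstar, e ∉ A.1 := by
    intro e he hc
    have h1 : e ∈ (σ A).1 := hTu₀A ▸ hDstar0 he
    have : e ∈ (σ A).1 ∩ A.1 := Finset.mem_inter.2 ⟨h1, hc⟩
    rw [hAdisj] at this
    exact absurd this (Finset.notMem_empty e)
  have hDstarne : Dstar.Nonempty := by
    rw [← Finset.card_pos, hDstarcard]; omega
  obtain ⟨xs, hxs⟩ := hDstarne
  have hxsD : xs ∉ D := fun hc => hDstarA xs hxs (hDsub hc)
  have hxsT : xs ∈ T xs := hcore xs hxsD hxs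
  have hxsS : xs ∈ (S xs).1 := by
    rw [hSval xs hxsD]; exact Finset.mem_insert_self _ _
  have hfix : σ (S xs) = S xs := by
    rcases hfd (S xs) with h | h
    · exact h
    · exfalso
      have : xs ∈ (σ (S xs)).1 ∩ (S xs).1 := Finset.mem_inter.2 ⟨hxsT, hxsS⟩
      rw [h] at this
      exact absurd this (Finset.notMem_empty xs)
  have hDsub2 : Dstar ⊆ insert xs D := by
    intro e he
    have h1 : e ∈ (σ (S xs)).1 := hcore xs hxsD he
    rw [hfix, hSval xs hxsD] at h1
    exact h1
  have : Dstar ⊆ {xs} := by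
    intro e he
    rcases Finset.mem_insert.1 (hDsub2 he) with h | h
    · exact h ▸ Finset.mem_singleton_self _
    · exact absurd (hDsub h) (hDstarA e he)
  have := Finset.card_le_card this
  rw [hDstarcard, Finset.card_singleton] at this
  omega

end KCaux

lemma KC_part1 (n r : ℕ) (hr : 3 ≤ r) (hn : 2 * r + 1 ≤ n)
    (α : Type*) (C : (KneserCompl n r).Coloring α) :
    IsDistinguishing (KneserCompl n r) C := by
  intro σ hauto hcol
  apply KCaux.key hr hn σ hauto
  intro v
  by_cases h : σ v = v
  · exact Or.inl h
  · right
    have hnadj : ¬ (KneserCompl n r).Adj (σ v) v := by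
      intro hadj
      exact (C.valid hadj) (hcol v)
    simp only [KneserCompl] at hnadj
    push_neg at hnadj
    have := hnadj h
    exact this

theorem stmt14 (n r : ℕ) (hr : 3 ≤ r) (hn : 2 * r + 1 ≤ n) :
    (∀ (α : Type*) (C : (KneserCompl n r).Coloring α),
      IsDistinguishing (KneserCompl n r) C) ∧
    distChromNum (KneserCompl n r) = chromNum (KneserCompl n r) := by
  refine ⟨fun α C => KC_part1 n r hr hn α C, ?_⟩
  unfold distChromNum chromNum
  congr 1
  ext m
  simp only [Set.mem_setOf_eq]
  constructor
  · rintro ⟨C, _⟩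
    exact ⟨C⟩
  · rintro ⟨C⟩
    exact ⟨C, KC_part1 n r hr hn _ C⟩
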